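/- Under the assumptions that each ∇_x f^m and ∇_y f^m is L_f-Lipschitz, ||∇_y f^m|| ≤ C_{fy}, ||∇²_{xy} g^m|| ≤ C_{gxy}, ∇²_{xy} g^m is L_{gxy}-Lipschitz, ∇²_{yy} g^m is L_{gyy}-Lipschitz, and ∇²_{yy} g^m ⪰ μ I_p, the total objective F(x) = (1/M)∑_{m=1}^M f^m(x, y*(x)) has L-Lipschitz gradient with L = (L_f + C_{gxy} L_f/μ + C_{fy}(C_{gxy} L_{gyy}/μ² + L_{gxy}/μ))(1 + C_{gxy}/μ). -/

import Mathlib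

open Set InnerProductSpace RealInnerProductSpace

lemma my_sqrt_sq_add_sq_le {a b : ℝ} (ha : 0 ≤ a) (hb : 0 ≤ b) :
    Real.sqrt (a ^ 2 + b ^ 2) ≤ a + b := by
  have h : a ^ 2 + b ^ 2 ≤ (a + b) ^ 2 := by nlinarith
  calc Real.sqrt (a ^ 2 + b ^ 2) ≤ Real.sqrt ((a + b) ^ 2) := Real.sqrt_le_sqrt h
    _ = a + b := Real.sqrt_sq (by positivity)

lemma my_convexOn_fderiv_mono {F : Type*} [NormedAddCommGroup F] [NormedSpace ℝ F] {φ : F → ℝ}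
    (hφ : ConvexOn ℝ Set.univ φ) (hd : Differentiable ℝ φ) (a b : F) :
    fderiv ℝ φ b (a - b) ≤ fderiv ℝ φ a (a - b) := by
  rcases eq_or_ne a b with rfl | hab
  · simp
  set c : ℝ → F := fun t => b + t • (a - b) with hc
  have hct : ∀ t : ℝ, HasDerivAt c (a - b) t := by
    intro t
    have h1 : HasDerivAt (fun t : ℝ => t • (a - b)) ((1 : ℝ) • (a - b)) t :=
      (hasDerivAt_id t).smul_const (a - b)
    simpa [c] using h1.const_add b
  have hψ : ∀ t : ℝ, HasDerivAt (φ ∘ c) (fderiv ℝ φ (c t) (a - b)) t := fun t =>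
    (hd (c t)).hasFDerivAt.comp_hasDerivAt t (hct t)
  have hconv : ConvexOn ℝ Set.univ (φ ∘ c) := by
    have h2 := hφ.comp_affineMap (AffineMap.lineMap b a : ℝ →ᵃ[ℝ] F)
    have heq : (φ ∘ (AffineMap.lineMap b a : ℝ →ᵃ[ℝ] F)) = φ ∘ c := by
      funext t
      simp [AffineMap.lineMap_apply, c, add_comm]
    have hset : ((AffineMap.lineMap b a : ℝ →ᵃ[ℝ] F)) ⁻¹' Set.univ = Set.univ := by simp
    rw [heq, hset] at h2
    exact h2
  have hc0 : c 0 = b := by simp [c]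
  have hc1 : c 1 = a := by simp [c]
  have h1 : fderiv ℝ φ b (a - b) ≤ slope (φ ∘ c) 0 1 := by
    have := hconv.le_slope_of_hasDerivAt (Set.mem_univ (0:ℝ)) (Set.mem_univ (1:ℝ))
      one_pos (hψ 0)
    rwa [hc0] at this
  have h2 : slope (φ ∘ c) 0 1 ≤ fderiv ℝ φ a (a - b) := by
    have := hconv.slope_le_of_hasDerivAt (Set.mem_univ (0:ℝ)) (Set.mem_univ (1:ℝ))
      one_pos (hψ 1)
    rwa [hc1] at this
  linarith

lemma my_strong_fderiv_mono {F : Type*} [NormedAddCommGroup F] [InnerProductSpace ℝ F]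
    {μ : ℝ} {φ : F → ℝ} (hφ : StrongConvexOn Set.univ μ φ) (hd : Differentiable ℝ φ)
    (a b : F) :
    μ * ‖a - b‖ ^ 2 + fderiv ℝ φ b (a - b) ≤ fderiv ℝ φ a (a - b) := by
  have hsq : ∀ y : F, HasFDerivAt (fun y : F => μ / 2 * ‖y‖ ^ 2)
      ((μ / 2) • (2 • (innerSL ℝ y))) y := fun y =>
    ((hasStrictFDerivAt_norm_sq y).hasFDerivAt).const_smul (μ / 2)
  have hcv : ConvexOn ℝ Set.univ (fun y => φ y - μ / 2 * ‖y‖ ^ 2) :=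
    strongConvexOn_iff_convex.mp hφ
  have hdd : Differentiable ℝ (fun y => φ y - μ / 2 * ‖y‖ ^ 2) :=
    hd.sub fun y => ((hsq y).differentiableAt)
  have key := my_convexOn_fderiv_mono hcv hdd a b
  have hfd : ∀ y : F, fderiv ℝ (fun y => φ y - μ / 2 * ‖y‖ ^ 2) y (a - b)
      = fderiv ℝ φ y (a - b) - μ * ⟪y, a - b⟫ := by
    intro y
    have h1 : HasFDerivAt (fun y => φ y - μ / 2 * ‖y‖ ^ 2)
        (fderiv ℝ φ y - (μ / 2) • (2 • (innerSL ℝ y))) y :=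
      (hd y).hasFDerivAt.sub (hsq y)
    rw [h1.fderiv]
    simp [ContinuousLinearMap.sub_apply, ContinuousLinearMap.smul_apply, innerSL_apply_apply]
    ring
  rw [hfd a, hfd b] at key
  have hinner : ⟪a, a - b⟫ - ⟪b, a - b⟫ = ‖a - b‖ ^ 2 := by
    rw [← inner_sub_left, real_inner_self_eq_norm_sq]
  have h3 : μ * (⟪a, a - b⟫ - ⟪b, a - b⟫) = μ * ‖a - b‖ ^ 2 := by rw [hinner]
  linarith [key, h3]

lemma my_coercive {F : Type*} [NormedAddCommGroup F] [InnerProductSpace ℝ F]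
    {G : F → F} {A : F →L[ℝ] F} {μ : ℝ} {y : F} (hA : HasFDerivAt G A y)
    (mono : ∀ u v : F, μ * ‖u - v‖ ^ 2 ≤ ⟪G u - G v, u - v⟫) (v : F) :
    μ * ‖v‖ ^ 2 ≤ ⟪A v, v⟫ := by
  set c : ℝ → F := fun t => y + t • v with hc
  have hct : ∀ t : ℝ, HasDerivAt c v t := by
    intro t
    have h1 : HasDerivAt (fun t : ℝ => t • v) ((1 : ℝ) • v) t := (hasDerivAt_id t).smul_const v
    simpa [c] using h1.const_add y
  have hA' : HasFDerivAt G A (c 0) := by simpa [c] using hA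
  have hGc : HasDerivAt (fun t => G (c t)) (A v) 0 := by
    exact hA'.comp_hasDerivAt (0:ℝ) (hct 0)
  have hψ : HasDerivAt (fun t => ⟪G (c t), v⟫) ⟪A v, v⟫ 0 := by
    have := (HasDerivAt.inner ℝ hGc (hasDerivAt_const (0:ℝ) v))
    simpa using this
  have hψ' : HasDerivAt (fun t => ⟪G (c t), v⟫ - ⟪G y, v⟫) ⟪A v, v⟫ 0 := hψ.sub_const _
  have hslope : Filter.Tendsto (slope (fun t => ⟪G (c t), v⟫ - ⟪G y, v⟫) 0)
      (nhdsWithin 0 (Set.Ioi 0)) (nhds ⟪A v, v⟫) := by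
    have h2 := hasDerivAt_iff_tendsto_slope.mp hψ'
    exact h2.mono_left (nhdsWithin_mono 0 (fun t ht => ne_of_gt ht))
  refine ge_of_tendsto hslope ?_
  refine eventually_nhdsWithin_of_forall (fun t ht => ?_)
  have ht0 : (0:ℝ) < t := ht
  have hm := mono (c t) y
  have hcy : c t - y = t • v := by simp [c]
  rw [hcy] at hm
  have hip : ⟪G (c t) - G y, t • v⟫ = t * (⟪G (c t), v⟫ - ⟪G y, v⟫) := by
    rw [real_inner_smul_right, inner_sub_left]
  rw [hip, norm_smul] at hm
  have hψ0 : ((fun t => ⟪G (c t), v⟫ - ⟪G y, v⟫) : ℝ → ℝ) 0 = 0 := by simp [c]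
  have hslope_eq : slope (fun t => ⟪G (c t), v⟫ - ⟪G y, v⟫) 0 t
      = (⟪G (c t), v⟫ - ⟪G y, v⟫) / t := by
    rw [slope_def_field]
    have hc0 : c 0 = y := by simp [c]
    rw [hc0, sub_self, sub_zero, sub_zero]
  rw [hslope_eq, le_div_iff₀ ht0]
  have habs : ‖t‖ = t := by rw [Real.norm_eq_abs, abs_of_pos ht0]
  rw [habs] at hm
  nlinarith [hm]

lemma my_avg_norm_le {α : Type*} [NormedAddCommGroup α] [NormedSpace ℝ α] {M : ℕ} (hM : 0 < M)
    {A : Fin M → α} {C : ℝ} (h : ∀ m, ‖A m‖ ≤ C) :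
    ‖(M : ℝ)⁻¹ • ∑ m, A m‖ ≤ C := by
  have h1 : ‖∑ m, A m‖ ≤ (M : ℝ) * C := by
    calc ‖∑ m, A m‖ ≤ ∑ _m : Fin M, C := norm_sum_le_of_le _ (fun m _ => h m)
      _ = (M : ℝ) * C := by simp [mul_comm]
  have hMpos : (0 : ℝ) < (M : ℝ) := by exact_mod_cast hM
  rw [norm_smul, norm_inv, Real.norm_natCast]
  rw [inv_mul_le_iff₀ hMpos]
  linarith [h1]

lemma my_avg_sub_norm_le {α : Type*} [NormedAddCommGroup α] [NormedSpace ℝ α] {M : ℕ}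
    (hM : 0 < M) {A B : Fin M → α} {C : ℝ} (h : ∀ m, ‖A m - B m‖ ≤ C) :
    ‖((M : ℝ)⁻¹ • ∑ m, A m) - ((M : ℝ)⁻¹ • ∑ m, B m)‖ ≤ C := by
  have heq : ((M : ℝ)⁻¹ • ∑ m, A m) - ((M : ℝ)⁻¹ • ∑ m, B m)
      = (M : ℝ)⁻¹ • ∑ m, (A m - B m) := by
    rw [Finset.sum_sub_distrib, smul_sub]
  rw [heq]
  exact my_avg_norm_le hM h

lemma my_chain' {E P Q : Type*} [NormedAddCommGroup E] [NormedSpace ℝ E]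
    [NormedAddCommGroup P] [NormedSpace ℝ P] [NormedAddCommGroup Q] [NormedSpace ℝ Q]
    {Φ : E × P → Q} {y : E → P} {J : E →L[ℝ] P} {x : E}
    (hΦ : DifferentiableAt ℝ Φ (x, y x)) (hy : HasFDerivAt y J x)
    {Dx : E →L[ℝ] Q} {Dy : P →L[ℝ] Q}
    (hDx : HasFDerivAt (fun x' => Φ (x', y x)) Dx x)
    (hDy : HasFDerivAt (fun y' => Φ (x, y')) Dy (y x)) :
    HasFDerivAt (fun x' => Φ (x', y x')) (Dx + Dy.comp J) x := by
  have hq : HasFDerivAt (fun x' => (x', y x')) ((ContinuousLinearMap.id ℝ E).prod J) x :=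
    HasFDerivAt.prodMk (hasFDerivAt_id x) hy
  have hcomp := hΦ.hasFDerivAt.comp x hq
  have e1 : Dx = (fderiv ℝ Φ (x, y x)).comp (ContinuousLinearMap.inl ℝ E P) :=
    hDx.unique (hΦ.hasFDerivAt.comp x (hasFDerivAt_prodMk_left x (y x)))
  have e2 : Dy = (fderiv ℝ Φ (x, y x)).comp (ContinuousLinearMap.inr ℝ E P) :=
    hDy.unique (hΦ.hasFDerivAt.comp (y x) (hasFDerivAt_prodMk_right x (y x)))
  convert hcomp using 1
  · rfl
  ext v
  rw [e1, e2]
  simp only [ContinuousLinearMap.add_apply, ContinuousLinearMap.comp_apply,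
    ContinuousLinearMap.inl_apply, ContinuousLinearMap.inr_apply,
    ContinuousLinearMap.prod_apply, ContinuousLinearMap.id_apply]
  rw [← map_add]
  congr 1
  simp [Prod.mk_add_mk]

lemma my_gradC1 {E P : Type*} [NormedAddCommGroup E] [NormedSpace ℝ E]
    [NormedAddCommGroup P] [InnerProductSpace ℝ P] [CompleteSpace P] {g : E → P → ℝ}
    (hg : ContDiff ℝ 2 (fun q : E × P => g q.1 q.2)) :
    ContDiff ℝ 1 (fun z : E × P => gradient (fun y' => g z.1 y') z.2) := by
  have hD : ContDiff ℝ 1 (fun z : E × P => fderiv ℝ (fun y' => g z.1 y') z.2) := by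
    refine ContDiff.fderiv (f := fun (z : E × P) (y : P) => g z.1 y)
      (g := fun z : E × P => z.2) (m := 2)
      (hg.comp (ContDiff.prodMk (contDiff_fst.comp contDiff_fst) contDiff_snd)) contDiff_snd (by norm_num)
  exact (LinearIsometryEquiv.contDiff (toDual ℝ P).symm).comp hD

lemma my_grad_inner {F : Type*} [NormedAddCommGroup F] [InnerProductSpace ℝ F] [CompleteSpace F]
    (ψ : F → ℝ) (y v : F) : ⟪gradient ψ y, v⟫ = fderiv ℝ ψ y v :=
  InnerProductSpace.toDual_symm_apply


set_option maxHeartbeats 2000000 in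
/-- Smoothness of the total objective `F(x) = (1/M) ∑_m f^m(x, y*(x))`:
under `L_f`-Lipschitzness of `∇_x f^m, ∇_y f^m`, `‖∇_y f^m‖ ≤ C_{fy}`,
`‖∇²_{xy} g^m‖ ≤ C_{gxy}`, `L_{gxy}`/`L_{gyy}`-Lipschitzness of `∇²_{xy} g^m`,
`∇²_{yy} g^m` and `∇²_{yy} g^m ⪰ μ I`, the gradient `∇F` is `L`-Lipschitz with
`L = (L_f + C_{gxy} L_f/μ + C_{fy}(C_{gxy} L_{gyy}/μ² + L_{gxy}/μ))(1 + C_{gxy}/μ)`. -/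
theorem total_objective_smooth (d p M : ℕ) (hM : 0 < M)
    (μ Lf Cfy Cgxy Lgxy Lgyy : ℝ) (hμ : 0 < μ) (hLf : 0 ≤ Lf) (hCfy : 0 ≤ Cfy)
    (hCgxy : 0 ≤ Cgxy) (hLgxy : 0 ≤ Lgxy) (hLgyy : 0 ≤ Lgyy)
    (f g : Fin M → EuclideanSpace ℝ (Fin d) → EuclideanSpace ℝ (Fin p) → ℝ)
    (hf : ∀ m, ContDiff ℝ 1
      (fun q : EuclideanSpace ℝ (Fin d) × EuclideanSpace ℝ (Fin p) => f m q.1 q.2))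
    (hg : ∀ m, ContDiff ℝ 2
      (fun q : EuclideanSpace ℝ (Fin d) × EuclideanSpace ℝ (Fin p) => g m q.1 q.2))
    (hfx_lip : ∀ m x1 y1 x2 y2,
      ‖gradient (fun x' => f m x' y1) x1 - gradient (fun x' => f m x' y2) x2‖ ≤
        Lf * Real.sqrt (‖x1 - x2‖ ^ 2 + ‖y1 - y2‖ ^ 2))
    (hfy_lip : ∀ m x1 y1 x2 y2,
      ‖gradient (fun y' => f m x1 y') y1 - gradient (fun y' => f m x2 y') y2‖ ≤
        Lf * Real.sqrt (‖x1 - x2‖ ^ 2 + ‖y1 - y2‖ ^ 2))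
    (hfy_bound : ∀ m x y, ‖gradient (fun y' => f m x y') y‖ ≤ Cfy)
    (hsc : ∀ m x, StrongConvexOn Set.univ μ (fun y => g m x y))
    (Hxy : Fin M → EuclideanSpace ℝ (Fin d) → EuclideanSpace ℝ (Fin p) →
      (EuclideanSpace ℝ (Fin d) →L[ℝ] EuclideanSpace ℝ (Fin p)))
    (hHxy : ∀ m x y, Hxy m x y =
      fderiv ℝ (fun x' => gradient (fun y' => g m x' y') y) x)
    (Hyy : Fin M → EuclideanSpace ℝ (Fin d) → EuclideanSpace ℝ (Fin p) →
      (EuclideanSpace ℝ (Fin p) →L[ℝ] EuclideanSpace ℝ (Fin p)))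
    (hHyy : ∀ m x y, Hyy m x y = fderiv ℝ (gradient (fun y' => g m x y')) y)
    (hcross_bound : ∀ m x y, ‖Hxy m x y‖ ≤ Cgxy)
    (hcross_lip : ∀ m x1 y1 x2 y2, ‖Hxy m x1 y1 - Hxy m x2 y2‖ ≤
      Lgxy * Real.sqrt (‖x1 - x2‖ ^ 2 + ‖y1 - y2‖ ^ 2))
    (hyy_lip : ∀ m x1 y1 x2 y2, ‖Hyy m x1 y1 - Hyy m x2 y2‖ ≤
      Lgyy * Real.sqrt (‖x1 - x2‖ ^ 2 + ‖y1 - y2‖ ^ 2))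
    (ystar : EuclideanSpace ℝ (Fin d) → EuclideanSpace ℝ (Fin p))
    (hystar : Differentiable ℝ ystar)
    (hmin : ∀ x y, (M : ℝ)⁻¹ * ∑ m, g m x (ystar x) ≤ (M : ℝ)⁻¹ * ∑ m, g m x y) :
    ∀ x1 x2,
      ‖gradient (fun x => (M : ℝ)⁻¹ * ∑ m, f m x (ystar x)) x1 -
        gradient (fun x => (M : ℝ)⁻¹ * ∑ m, f m x (ystar x)) x2‖ ≤
      (Lf + Cgxy * Lf / μ + Cfy * (Cgxy * Lgyy / μ ^ 2 + Lgxy / μ)) * (1 + Cgxy / μ) *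
        ‖x1 - x2‖ := by
  intro x1 x2
  set κ := Cgxy / μ with hκdef
  have hκ0 : 0 ≤ κ := div_nonneg hCgxy hμ.le
  set J : EuclideanSpace ℝ (Fin d) →
      (EuclideanSpace ℝ (Fin d) →L[ℝ] EuclideanSpace ℝ (Fin p)) :=
    fun x => fderiv ℝ ystar x with hJdef
  have hJ : ∀ x, HasFDerivAt ystar (J x) x := fun x => (hystar x).hasFDerivAt
  have hgdiff : ∀ m, Differentiable ℝ
      (fun q : EuclideanSpace ℝ (Fin d) × EuclideanSpace ℝ (Fin p) => g m q.1 q.2) :=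
    fun m => (hg m).differentiable (by norm_num)
  have hfdiff : ∀ m, Differentiable ℝ
      (fun q : EuclideanSpace ℝ (Fin d) × EuclideanSpace ℝ (Fin p) => f m q.1 q.2) :=
    fun m => (hf m).differentiable (by norm_num)
  have hgy_diff : ∀ m x, Differentiable ℝ (fun y => g m x y) :=
    fun m x => (hgdiff m).comp ((differentiable_const x).prodMk differentiable_id)
  have hΓdiff : ∀ m, Differentiable ℝ
      (fun z : EuclideanSpace ℝ (Fin d) × EuclideanSpace ℝ (Fin p) =>
        gradient (fun y' => g m z.1 y') z.2) :=
    fun m => (my_gradC1 (hg m)).differentiable (by norm_num)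
  -- gradient of the averaged lower-level objective in y
  have hsum_grad : ∀ x y, HasFDerivAt (fun y' => (M:ℝ)⁻¹ * ∑ m, g m x y')
      (InnerProductSpace.toDual ℝ _
        ((M:ℝ)⁻¹ • ∑ m, gradient (fun y' => g m x y') y)) y := by
    intro x y
    have hper : ∀ m : Fin M, HasFDerivAt (fun y' => g m x y')
        (fderiv ℝ (fun y' => g m x y') y) y := fun m => ((hgy_diff m x) y).hasFDerivAt
    have hs := (HasFDerivAt.fun_sum (fun m (_ : m ∈ Finset.univ) => hper m)).const_mul (M:ℝ)⁻¹
    have e : InnerProductSpace.toDual ℝ _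
        ((M:ℝ)⁻¹ • ∑ m, gradient (fun y' => g m x y') y)
        = (M:ℝ)⁻¹ • ∑ m, fderiv ℝ (fun y' => g m x y') y := by
      ext v
      simp only [InnerProductSpace.toDual_apply_apply, ContinuousLinearMap.smul_apply,
        ContinuousLinearMap.sum_apply, smul_eq_mul]
      rw [real_inner_smul_left, sum_inner]
      congr 1
      exact Finset.sum_congr rfl (fun m _ => my_grad_inner _ _ _)
    rw [e]
    exact hs
  -- first-order condition
  have hG0 : ∀ x, ((M:ℝ)⁻¹ • ∑ m, gradient (fun y' => g m x y') (ystar x))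
      = (0 : EuclideanSpace ℝ (Fin p)) := by
    intro x
    have hloc : IsLocalMin (fun y => (M:ℝ)⁻¹ * ∑ m, g m x y) (ystar x) :=
      Filter.Eventually.of_forall (fun y => hmin x y)
    have hfz := hloc.fderiv_eq_zero
    have h1 := (hsum_grad x (ystar x)).fderiv
    rw [hfz] at h1
    apply (InnerProductSpace.toDual ℝ _).injective
    rw [← h1, map_zero]
  -- strong monotonicity of the averaged gradient in y
  have hmono : ∀ x (y1 y2 : EuclideanSpace ℝ (Fin p)), μ * ‖y1 - y2‖^2 ≤
      ⟪((M:ℝ)⁻¹ • ∑ m, gradient (fun y' => g m x y') y1)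
        - ((M:ℝ)⁻¹ • ∑ m, gradient (fun y' => g m x y') y2), y1 - y2⟫ := by
    intro x y1 y2
    have hper : ∀ m : Fin M, μ * ‖y1 - y2‖^2 ≤
        ⟪gradient (fun y' => g m x y') y1 - gradient (fun y' => g m x y') y2, y1 - y2⟫ := by
      intro m
      have h := my_strong_fderiv_mono (hsc m x) (hgy_diff m x) y1 y2
      rw [inner_sub_left, my_grad_inner, my_grad_inner]
      linarith
    rw [← smul_sub, ← Finset.sum_sub_distrib, real_inner_smul_left, sum_inner]
    have hMpos : (0:ℝ) < (M:ℝ) := by exact_mod_cast hM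
    have hsum : (M:ℝ) * (μ * ‖y1 - y2‖^2) ≤
        ∑ m, ⟪gradient (fun y' => g m x y') y1 - gradient (fun y' => g m x y') y2, y1 - y2⟫ := by
      calc (M:ℝ) * (μ * ‖y1 - y2‖^2) = ∑ _m : Fin M, μ * ‖y1 - y2‖^2 := by
            simp [Finset.sum_const, mul_comm]
        _ ≤ _ := Finset.sum_le_sum (fun m _ => hper m)
    have h2 := mul_le_mul_of_nonneg_left hsum (inv_nonneg.mpr hMpos.le)
    rwa [inv_mul_cancel_left₀ hMpos.ne'] at h2
  -- Lipschitzness of the averaged gradient in x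
  have hGxlip : ∀ (y : EuclideanSpace ℝ (Fin p)) (u w : EuclideanSpace ℝ (Fin d)),
      ‖((M:ℝ)⁻¹ • ∑ m, gradient (fun y' => g m u y') y)
        - ((M:ℝ)⁻¹ • ∑ m, gradient (fun y' => g m w y') y)‖ ≤ Cgxy * ‖u - w‖ := by
    intro y u w
    have hd : ∀ x, HasFDerivAt
        (fun x' => (M:ℝ)⁻¹ • ∑ m, gradient (fun y' => g m x' y') y)
        ((M:ℝ)⁻¹ • ∑ m, Hxy m x y) x := by
      intro x
      have hper : ∀ m : Fin M, HasFDerivAt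
          (fun x' => gradient (fun y' => g m x' y') y) (Hxy m x y) x := by
        intro m
        rw [hHxy m x y]
        exact (((hΓdiff m).comp (differentiable_id.prodMk (differentiable_const y))) x).hasFDerivAt
      exact (HasFDerivAt.fun_sum (fun m (_ : m ∈ Finset.univ) => hper m)).const_smul (M:ℝ)⁻¹
    have hb : ∀ x ∈ Set.univ, ‖fderiv ℝ
        (fun x' => (M:ℝ)⁻¹ • ∑ m, gradient (fun y' => g m x' y') y) x‖ ≤ Cgxy := by
      intro x _
      rw [(hd x).fderiv]
      exact my_avg_norm_le hM (fun m => hcross_bound m x y)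
    have := Convex.norm_image_sub_le_of_norm_fderiv_le
      (fun x (_ : x ∈ Set.univ) => (hd x).differentiableAt) hb convex_univ
      (Set.mem_univ w) (Set.mem_univ u)
    simpa using this
  -- ystar is Lipschitz
  have hyLip : ∀ u w, ‖ystar u - ystar w‖ ≤ κ * ‖u - w‖ := by
    intro u w
    rcases eq_or_lt_of_le (norm_nonneg (ystar u - ystar w)) with hz | hz
    · rw [← hz]; positivity
    have h1 := hmono u (ystar u) (ystar w)
    rw [hG0 u] at h1
    have h3 : μ * ‖ystar u - ystar w‖^2 ≤ Cgxy * ‖u - w‖ * ‖ystar u - ystar w‖ := by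
      refine h1.trans ?_
      rw [zero_sub]
      refine (real_inner_le_norm _ _).trans ?_
      rw [norm_neg]
      have h4 : ‖(M:ℝ)⁻¹ • ∑ m, gradient (fun y' => g m u y') (ystar w)‖ ≤ Cgxy * ‖u - w‖ := by
        have h2 := hGxlip (ystar w) u w
        rw [hG0 w, sub_zero] at h2
        exact h2
      exact mul_le_mul_of_nonneg_right h4 (norm_nonneg _)
    rw [hκdef, div_mul_eq_mul_div, le_div_iff₀ hμ]
    nlinarith [h3, hz]
  -- a sqrt bound used repeatedly
  have hsqrtb : ∀ (u w : EuclideanSpace ℝ (Fin d)),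
      Real.sqrt (‖u - w‖ ^ 2 + ‖ystar u - ystar w‖ ^ 2) ≤ (1 + κ) * ‖u - w‖ := by
    intro u w
    refine (my_sqrt_sq_add_sq_le (norm_nonneg _) (norm_nonneg _)).trans ?_
    have := hyLip u w
    nlinarith [this]
  -- derivative of x ↦ ∇_y g^m(x, y*(x))
  have hKm : ∀ (m : Fin M) x, HasFDerivAt
      (fun x' => gradient (fun y' => g m x' y') (ystar x'))
      (Hxy m x (ystar x) + (Hyy m x (ystar x)).comp (J x)) x := by
    intro m x
    have hDx : HasFDerivAt (fun x' => gradient (fun y' => g m x' y') (ystar x))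
        (Hxy m x (ystar x)) x := by
      rw [hHxy m x (ystar x)]
      exact (((hΓdiff m).comp
        (differentiable_id.prodMk (differentiable_const (ystar x)))) x).hasFDerivAt
    have hDy : HasFDerivAt (fun y' => gradient (fun y'' => g m x y'') y')
        (Hyy m x (ystar x)) (ystar x) := by
      rw [hHyy m x (ystar x)]
      exact (((hΓdiff m).comp
        ((differentiable_const x).prodMk differentiable_id)) (ystar x)).hasFDerivAt
    exact my_chain'
      (Φ := fun z : EuclideanSpace ℝ (Fin d) × EuclideanSpace ℝ (Fin p) =>
        gradient (fun y' => g m z.1 y') z.2)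
      (y := ystar) ((hΓdiff m) (x, ystar x)) (hJ x) hDx hDy
  -- key identity Axy + Ayy ∘ J = 0
  have hAJ : ∀ x, ((M:ℝ)⁻¹ • ∑ m, Hxy m x (ystar x))
      + ((M:ℝ)⁻¹ • ∑ m, Hyy m x (ystar x)).comp (J x) = 0 := by
    intro x
    have hasF : HasFDerivAt
        (fun x' => (M:ℝ)⁻¹ • ∑ m, gradient (fun y' => g m x' y') (ystar x'))
        ((M:ℝ)⁻¹ • ∑ m, (Hxy m x (ystar x) + (Hyy m x (ystar x)).comp (J x))) x :=
      (HasFDerivAt.fun_sum (fun m (_ : m ∈ Finset.univ) => hKm m x)).const_smul (M:ℝ)⁻¹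
    have hcon : (fun x' => (M:ℝ)⁻¹ • ∑ m, gradient (fun y' => g m x' y') (ystar x'))
        = fun _ => (0 : EuclideanSpace ℝ (Fin p)) := funext (fun u => hG0 u)
    rw [hcon] at hasF
    have huniq := hasF.unique (hasFDerivAt_const 0 x)
    have hsplit : (M:ℝ)⁻¹ • ∑ m, (Hxy m x (ystar x) + (Hyy m x (ystar x)).comp (J x))
        = ((M:ℝ)⁻¹ • ∑ m, Hxy m x (ystar x))
          + ((M:ℝ)⁻¹ • ∑ m, Hyy m x (ystar x)).comp (J x) := by
      rw [Finset.sum_add_distrib, smul_add]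
      congr 1
      ext v
      simp [ContinuousLinearMap.comp_apply, ContinuousLinearMap.sum_apply,
        ContinuousLinearMap.smul_apply]
    rw [← hsplit]
    exact huniq
  -- Ayy is the derivative of the averaged gradient in y
  have hAyyD : ∀ x, HasFDerivAt
      (fun y => (M:ℝ)⁻¹ • ∑ m, gradient (fun y' => g m x y') y)
      ((M:ℝ)⁻¹ • ∑ m, Hyy m x (ystar x)) (ystar x) := by
    intro x
    have hper : ∀ m : Fin M, HasFDerivAt
        (fun y => gradient (fun y' => g m x y') y) (Hyy m x (ystar x)) (ystar x) := by
      intro m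
      rw [hHyy m x (ystar x)]
      exact (((hΓdiff m).comp
        ((differentiable_const x).prodMk differentiable_id)) (ystar x)).hasFDerivAt
    exact (HasFDerivAt.fun_sum (fun m (_ : m ∈ Finset.univ) => hper m)).const_smul (M:ℝ)⁻¹
  -- coercivity of Ayy
  have hcoer : ∀ x (v : EuclideanSpace ℝ (Fin p)),
      μ * ‖v‖^2 ≤ ⟪((M:ℝ)⁻¹ • ∑ m, Hyy m x (ystar x)) v, v⟫ :=
    fun x v => my_coercive (hAyyD x) (hmono x) v
  have hAxyb : ∀ x, ‖(M:ℝ)⁻¹ • ∑ m, Hxy m x (ystar x)‖ ≤ Cgxy :=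
    fun x => my_avg_norm_le hM (fun m => hcross_bound m x (ystar x))
  -- bound on J
  have hJb : ∀ x, ‖J x‖ ≤ κ := by
    intro x
    refine ContinuousLinearMap.opNorm_le_bound _ hκ0 (fun v => ?_)
    have h1 := hcoer x (J x v)
    have hc := congrArg (fun T : EuclideanSpace ℝ (Fin d) →L[ℝ] EuclideanSpace ℝ (Fin p)
      => T v) (hAJ x)
    simp only [ContinuousLinearMap.add_apply, ContinuousLinearMap.comp_apply,
      ContinuousLinearMap.zero_apply] at hc
    have h2 : ((M:ℝ)⁻¹ • ∑ m, Hyy m x (ystar x)) (J x v)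
        = -(((M:ℝ)⁻¹ • ∑ m, Hxy m x (ystar x)) v) := eq_neg_of_add_eq_zero_right hc
    rw [h2] at h1
    have h3 : ⟪-(((M:ℝ)⁻¹ • ∑ m, Hxy m x (ystar x)) v), J x v⟫
        ≤ (Cgxy * ‖v‖) * ‖J x v‖ := by
      refine (real_inner_le_norm _ _).trans ?_
      rw [norm_neg]
      have h4 : ‖((M:ℝ)⁻¹ • ∑ m, Hxy m x (ystar x)) v‖ ≤ Cgxy * ‖v‖ :=
        le_trans (ContinuousLinearMap.le_opNorm _ v)
          (mul_le_mul_of_nonneg_right (hAxyb x) (norm_nonneg v))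
      exact mul_le_mul_of_nonneg_right h4 (norm_nonneg _)
    rcases eq_or_lt_of_le (norm_nonneg (J x v)) with hz | hz
    · rw [← hz]; positivity
    rw [hκdef, div_mul_eq_mul_div, le_div_iff₀ hμ]
    nlinarith [h1, h3, hz]
  -- Lipschitz bounds on Axy and Ayy along the two points
  have hAxylip : ‖((M:ℝ)⁻¹ • ∑ m, Hxy m x1 (ystar x1))
      - ((M:ℝ)⁻¹ • ∑ m, Hxy m x2 (ystar x2))‖ ≤ Lgxy * ((1 + κ) * ‖x1 - x2‖) := by
    refine my_avg_sub_norm_le hM (fun m => ?_)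
    refine (hcross_lip m x1 (ystar x1) x2 (ystar x2)).trans ?_
    exact mul_le_mul_of_nonneg_left (hsqrtb x1 x2) hLgxy
  have hAyylip : ‖((M:ℝ)⁻¹ • ∑ m, Hyy m x1 (ystar x1))
      - ((M:ℝ)⁻¹ • ∑ m, Hyy m x2 (ystar x2))‖ ≤ Lgyy * ((1 + κ) * ‖x1 - x2‖) := by
    refine my_avg_sub_norm_le hM (fun m => ?_)
    refine (hyy_lip m x1 (ystar x1) x2 (ystar x2)).trans ?_
    exact mul_le_mul_of_nonneg_left (hsqrtb x1 x2) hLgyy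
  -- Lipschitzness of J
  set Ly := (Lgxy + κ * Lgyy) * (1 + κ) / μ with hLydef
  have hJlip : ‖J x1 - J x2‖ ≤ Ly * ‖x1 - x2‖ := by
    have hLy0 : 0 ≤ Ly := by rw [hLydef]; positivity
    refine ContinuousLinearMap.opNorm_le_bound _ (by positivity) (fun v => ?_)
    have h1 := hcoer x1 ((J x1 - J x2) v)
    have hc1 := congrArg (fun T : EuclideanSpace ℝ (Fin d) →L[ℝ] EuclideanSpace ℝ (Fin p)
      => T v) (hAJ x1)
    have hc2 := congrArg (fun T : EuclideanSpace ℝ (Fin d) →L[ℝ] EuclideanSpace ℝ (Fin p)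
      => T v) (hAJ x2)
    simp only [ContinuousLinearMap.add_apply, ContinuousLinearMap.comp_apply,
      ContinuousLinearMap.zero_apply] at hc1 hc2
    have d1 : ((M:ℝ)⁻¹ • ∑ m, Hyy m x1 (ystar x1)) (J x1 v)
        = -(((M:ℝ)⁻¹ • ∑ m, Hxy m x1 (ystar x1)) v) := eq_neg_of_add_eq_zero_right hc1
    have d2 : ((M:ℝ)⁻¹ • ∑ m, Hyy m x2 (ystar x2)) (J x2 v)
        = -(((M:ℝ)⁻¹ • ∑ m, Hxy m x2 (ystar x2)) v) := eq_neg_of_add_eq_zero_right hc2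
    have e1 : ((M:ℝ)⁻¹ • ∑ m, Hyy m x1 (ystar x1)) ((J x1 - J x2) v)
        = (((M:ℝ)⁻¹ • ∑ m, Hxy m x2 (ystar x2)) v
            - ((M:ℝ)⁻¹ • ∑ m, Hxy m x1 (ystar x1)) v)
          + (((M:ℝ)⁻¹ • ∑ m, Hyy m x2 (ystar x2)) (J x2 v)
            - ((M:ℝ)⁻¹ • ∑ m, Hyy m x1 (ystar x1)) (J x2 v)) := by
      have e0 : ((M:ℝ)⁻¹ • ∑ m, Hyy m x1 (ystar x1)) ((J x1 - J x2) v)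
          = ((M:ℝ)⁻¹ • ∑ m, Hyy m x1 (ystar x1)) (J x1 v)
            - ((M:ℝ)⁻¹ • ∑ m, Hyy m x1 (ystar x1)) (J x2 v) := by
        rw [ContinuousLinearMap.sub_apply, map_sub]
      rw [e0, d1, d2]
      abel
    have h2 : ⟪((M:ℝ)⁻¹ • ∑ m, Hyy m x1 (ystar x1)) ((J x1 - J x2) v), (J x1 - J x2) v⟫
        ≤ ((Lgxy * ((1 + κ) * ‖x1 - x2‖)) * ‖v‖
            + (Lgyy * ((1 + κ) * ‖x1 - x2‖)) * (κ * ‖v‖)) * ‖(J x1 - J x2) v‖ := by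
      rw [e1]
      refine (real_inner_le_norm _ _).trans ?_
      refine mul_le_mul_of_nonneg_right ((norm_add_le _ _).trans ?_) (norm_nonneg _)
      have b1 : ‖((M:ℝ)⁻¹ • ∑ m, Hxy m x2 (ystar x2)) v
          - ((M:ℝ)⁻¹ • ∑ m, Hxy m x1 (ystar x1)) v‖
          ≤ (Lgxy * ((1 + κ) * ‖x1 - x2‖)) * ‖v‖ := by
        rw [← ContinuousLinearMap.sub_apply]
        refine (ContinuousLinearMap.le_opNorm _ v).trans ?_
        refine mul_le_mul_of_nonneg_right ?_ (norm_nonneg v)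
        rw [norm_sub_rev]
        exact hAxylip
      have b2 : ‖((M:ℝ)⁻¹ • ∑ m, Hyy m x2 (ystar x2)) (J x2 v)
          - ((M:ℝ)⁻¹ • ∑ m, Hyy m x1 (ystar x1)) (J x2 v)‖
          ≤ (Lgyy * ((1 + κ) * ‖x1 - x2‖)) * (κ * ‖v‖) := by
        rw [← ContinuousLinearMap.sub_apply]
        refine (ContinuousLinearMap.le_opNorm _ (J x2 v)).trans ?_
        have hJ2v : ‖J x2 v‖ ≤ κ * ‖v‖ :=
          le_trans (ContinuousLinearMap.le_opNorm _ v)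
            (mul_le_mul_of_nonneg_right (hJb x2) (norm_nonneg v))
        refine mul_le_mul ?_ hJ2v (norm_nonneg _) ?_
        · rw [norm_sub_rev]; exact hAyylip
        · positivity
      linarith [b1, b2]
    rcases eq_or_lt_of_le (norm_nonneg ((J x1 - J x2) v)) with hz | hz
    · rw [← hz]; positivity
    rw [hLydef]
    rw [show (Lgxy + κ * Lgyy) * (1 + κ) / μ * ‖x1 - x2‖ * ‖v‖
      = ((Lgxy + κ * Lgyy) * (1 + κ) * ‖x1 - x2‖ * ‖v‖) / μ from by ring]
    rw [le_div_iff₀ hμ]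
    nlinarith [h1, h2, hz]
  -- gradient formula for the total objective
  have hgradF : ∀ x, gradient (fun x' => (M:ℝ)⁻¹ * ∑ m, f m x' (ystar x')) x
      = (M:ℝ)⁻¹ • ∑ m, (gradient (fun x' => f m x' (ystar x)) x
          + ContinuousLinearMap.adjoint (J x) (gradient (fun y' => f m x y') (ystar x))) := by
    intro x
    have hfx_d : ∀ m : Fin M, DifferentiableAt ℝ (fun x' => f m x' (ystar x)) x :=
      fun m => ((hfdiff m).comp (differentiable_id.prodMk (differentiable_const (ystar x)))) x
    have hfy_d : ∀ m : Fin M, DifferentiableAt ℝ (fun y' => f m x y') (ystar x) :=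
      fun m => ((hfdiff m).comp ((differentiable_const x).prodMk differentiable_id)) (ystar x)
    have hper : ∀ m : Fin M, HasFDerivAt (fun x' => f m x' (ystar x'))
        ((fderiv ℝ (fun x' => f m x' (ystar x)) x)
          + (fderiv ℝ (fun y' => f m x y') (ystar x)).comp (J x)) x := by
      intro m
      exact my_chain'
        (Φ := fun q : EuclideanSpace ℝ (Fin d) × EuclideanSpace ℝ (Fin p) => f m q.1 q.2)
        (y := ystar) ((hfdiff m) (x, ystar x)) (hJ x)
        (hfx_d m).hasFDerivAt (hfy_d m).hasFDerivAt
    have hsum : HasFDerivAt (fun x' => (M:ℝ)⁻¹ * ∑ m, f m x' (ystar x'))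
        ((M:ℝ)⁻¹ • ∑ m, ((fderiv ℝ (fun x' => f m x' (ystar x)) x)
          + (fderiv ℝ (fun y' => f m x y') (ystar x)).comp (J x))) x :=
      (HasFDerivAt.fun_sum (fun m (_ : m ∈ Finset.univ) => hper m)).const_mul (M:ℝ)⁻¹
    have he : InnerProductSpace.toDual ℝ _
        ((M:ℝ)⁻¹ • ∑ m, (gradient (fun x' => f m x' (ystar x)) x
          + ContinuousLinearMap.adjoint (J x) (gradient (fun y' => f m x y') (ystar x))))
        = (M:ℝ)⁻¹ • ∑ m, ((fderiv ℝ (fun x' => f m x' (ystar x)) x)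
          + (fderiv ℝ (fun y' => f m x y') (ystar x)).comp (J x)) := by
      ext v
      simp only [InnerProductSpace.toDual_apply_apply, ContinuousLinearMap.smul_apply,
        ContinuousLinearMap.sum_apply, ContinuousLinearMap.add_apply,
        ContinuousLinearMap.comp_apply, smul_eq_mul]
      rw [real_inner_smul_left, sum_inner]
      congr 1
      refine Finset.sum_congr rfl (fun m _ => ?_)
      rw [inner_add_left, ContinuousLinearMap.adjoint_inner_left, my_grad_inner, my_grad_inner]
    have h2 : HasFDerivAt (fun x' => (M:ℝ)⁻¹ * ∑ m, f m x' (ystar x'))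
        (InnerProductSpace.toDual ℝ _
          ((M:ℝ)⁻¹ • ∑ m, (gradient (fun x' => f m x' (ystar x)) x
            + ContinuousLinearMap.adjoint (J x) (gradient (fun y' => f m x y') (ystar x))))) x := by
      rw [he]; exact hsum
    have h3 := h2.hasGradientAt.gradient
    rw [h3, LinearIsometryEquiv.symm_apply_apply]
  -- final assembly
  rw [hgradF x1, hgradF x2]
  refine my_avg_sub_norm_le hM (fun m => ?_)
  have t1 : ‖gradient (fun x' => f m x' (ystar x1)) x1
      - gradient (fun x' => f m x' (ystar x2)) x2‖ ≤ Lf * ((1 + κ) * ‖x1 - x2‖) := by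
    refine (hfx_lip m x1 (ystar x1) x2 (ystar x2)).trans ?_
    exact mul_le_mul_of_nonneg_left (hsqrtb x1 x2) hLf
  have t2 : ‖gradient (fun y' => f m x1 y') (ystar x1)
      - gradient (fun y' => f m x2 y') (ystar x2)‖ ≤ Lf * ((1 + κ) * ‖x1 - x2‖) := by
    refine (hfy_lip m x1 (ystar x1) x2 (ystar x2)).trans ?_
    exact mul_le_mul_of_nonneg_left (hsqrtb x1 x2) hLf
  have t3 : ‖gradient (fun y' => f m x2 y') (ystar x2)‖ ≤ Cfy := hfy_bound m x2 (ystar x2)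
  have u1 : ContinuousLinearMap.adjoint (J x1) (gradient (fun y' => f m x1 y') (ystar x1))
      - ContinuousLinearMap.adjoint (J x2) (gradient (fun y' => f m x2 y') (ystar x2))
      = ContinuousLinearMap.adjoint (J x1) (gradient (fun y' => f m x1 y') (ystar x1)
          - gradient (fun y' => f m x2 y') (ystar x2))
        + (ContinuousLinearMap.adjoint (J x1) - ContinuousLinearMap.adjoint (J x2))
            (gradient (fun y' => f m x2 y') (ystar x2)) := by
    rw [map_sub, ContinuousLinearMap.sub_apply]
    abel
  have u2 : ‖ContinuousLinearMap.adjoint (J x1) (gradient (fun y' => f m x1 y') (ystar x1)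
      - gradient (fun y' => f m x2 y') (ystar x2))‖
      ≤ κ * (Lf * ((1 + κ) * ‖x1 - x2‖)) := by
    refine (ContinuousLinearMap.le_opNorm _ _).trans ?_
    have hn : ‖ContinuousLinearMap.adjoint (J x1)‖ = ‖J x1‖ :=
      LinearIsometryEquiv.norm_map ContinuousLinearMap.adjoint (J x1)
    rw [hn]
    exact mul_le_mul (hJb x1) t2 (norm_nonneg _) hκ0
  have u3 : ‖(ContinuousLinearMap.adjoint (J x1) - ContinuousLinearMap.adjoint (J x2))
      (gradient (fun y' => f m x2 y') (ystar x2))‖ ≤ (Ly * ‖x1 - x2‖) * Cfy := by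
    have hadj : ContinuousLinearMap.adjoint (J x1) - ContinuousLinearMap.adjoint (J x2)
        = ContinuousLinearMap.adjoint (J x1 - J x2) :=
      (map_sub (ContinuousLinearMap.adjoint :
        (EuclideanSpace ℝ (Fin d) →L[ℝ] EuclideanSpace ℝ (Fin p)) ≃ₗᵢ⋆[ℝ] _) _ _).symm
    rw [hadj]
    refine (ContinuousLinearMap.le_opNorm _ _).trans ?_
    have hn : ‖ContinuousLinearMap.adjoint (J x1 - J x2)‖ = ‖J x1 - J x2‖ :=
      LinearIsometryEquiv.norm_map ContinuousLinearMap.adjoint (J x1 - J x2)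
    rw [hn]
    refine mul_le_mul hJlip t3 (norm_nonneg _) ?_
    positivity
  have hLy0 : 0 ≤ Ly := by rw [hLydef]; positivity
  calc ‖(gradient (fun x' => f m x' (ystar x1)) x1
        + ContinuousLinearMap.adjoint (J x1) (gradient (fun y' => f m x1 y') (ystar x1)))
      - (gradient (fun x' => f m x' (ystar x2)) x2
        + ContinuousLinearMap.adjoint (J x2) (gradient (fun y' => f m x2 y') (ystar x2)))‖
      = ‖(gradient (fun x' => f m x' (ystar x1)) x1
          - gradient (fun x' => f m x' (ystar x2)) x2)
        + (ContinuousLinearMap.adjoint (J x1) (gradient (fun y' => f m x1 y') (ystar x1))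
          - ContinuousLinearMap.adjoint (J x2) (gradient (fun y' => f m x2 y') (ystar x2)))‖ := by
        rw [add_sub_add_comm]
    _ ≤ ‖gradient (fun x' => f m x' (ystar x1)) x1
          - gradient (fun x' => f m x' (ystar x2)) x2‖
        + ‖ContinuousLinearMap.adjoint (J x1) (gradient (fun y' => f m x1 y') (ystar x1))
          - ContinuousLinearMap.adjoint (J x2) (gradient (fun y' => f m x2 y') (ystar x2))‖ :=
        norm_add_le _ _
    _ ≤ Lf * ((1 + κ) * ‖x1 - x2‖)
        + (κ * (Lf * ((1 + κ) * ‖x1 - x2‖)) + (Ly * ‖x1 - x2‖) * Cfy) := by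
        rw [u1]
        have := (norm_add_le
          (ContinuousLinearMap.adjoint (J x1) (gradient (fun y' => f m x1 y') (ystar x1)
            - gradient (fun y' => f m x2 y') (ystar x2)))
          ((ContinuousLinearMap.adjoint (J x1) - ContinuousLinearMap.adjoint (J x2))
            (gradient (fun y' => f m x2 y') (ystar x2))))
        linarith [t1, u2, u3, this]
    _ = (Lf + Cgxy * Lf / μ + Cfy * (Cgxy * Lgyy / μ ^ 2 + Lgxy / μ)) * (1 + κ)
        * ‖x1 - x2‖ := by
        rw [hLydef, hκdef]
        field_simp
        ring
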